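/- Let K be a field, n ≥ 2, and let 𝒱 be an affine subspace of M_n(K) with codimension strictly less than n-1. Then 𝒱 contains a matrix of rank n-1. -/

import Mathlib

open Module Submodule Set Matrix

section Aux
variable {K : Type*} [Field K]


variable {K : Type*} [Field K]

lemma aux_exists_not_mem {M : Type*} [AddCommGroup M] [Module K M] {U : Submodule K M}
    (hU : U ≠ ⊤) : ∃ y, y ∉ U := by
  by_contra h
  push_neg at h
  exact hU (Submodule.eq_top_iff'.2 h)

lemma aux_top {M : Type*} [AddCommGroup M] [Module K M] {U Y : Submodule K M}
    (hU : U ≠ ⊤) (h : ∀ y ∉ U, y ∈ Y) : Y = ⊤ := by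
  obtain ⟨u0, hu0⟩ := aux_exists_not_mem hU
  rw [eq_top_iff]
  intro v _
  by_cases hv : v ∈ U
  · have h1 : v + u0 ∉ U := fun hc => hu0 (by simpa using U.sub_mem hc hv)
    have h2 := h _ h1
    have h3 := h _ hu0
    simpa using Y.sub_mem h2 h3
  · exact h v hv

lemma aux_exchange {M : Type*} [AddCommGroup M] [Module K M] {R : Set M} {a y : M}
    (ha : a ∉ span K R) (hy : y ∉ span K (insert a R)) : a ∉ span K (insert y R) := by
  intro h
  rcases mem_span_insert.1 h with ⟨c, z, hz, rfl⟩
  have hc : c ≠ 0 := by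
    rintro rfl
    exact ha (by simpa using hz)
  apply hy
  have hmem : (c • y + z) - z ∈ span K (insert (c • y + z) R) :=
    Submodule.sub_mem _ (subset_span (mem_insert _ _)) (span_mono (subset_insert _ _) hz)
  have h2 := Submodule.smul_mem (span K (insert (c • y + z) R)) c⁻¹ hmem
  rwa [add_sub_cancel_right, smul_smul, inv_mul_cancel₀ hc, one_smul] at h2

lemma aux_growth {M Q : Type*} [AddCommGroup M] [Module K M] [AddCommGroup Q] [Module K Q]
    (β : M →ₗ[K] M →ₗ[K] Q) (hβ : span K {z | ∃ x y, z = β x y} = ⊤)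
    {S : Submodule K Q} (hS : S ≠ ⊤) {U : Submodule K M} (hU : U ≠ ⊤) :
    ∃ y ∉ U, ∃ x, β x y ∉ S := by
  by_contra hcon
  push_neg at hcon
  have hY : (⨅ x, S.comap (β x)) = ⊤ := aux_top hU (fun y hy => by
    simp only [Submodule.mem_iInf, Submodule.mem_comap]
    exact fun x => hcon y hy x)
  apply hS
  apply top_unique
  rw [← hβ, span_le]
  rintro z ⟨x, y, rfl⟩
  have : y ∈ (⨅ x, S.comap (β x)) := hY ▸ Submodule.mem_top
  simpa using (Submodule.mem_iInf _).1 this x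

lemma aux_span_ne_top {n r : ℕ} (hr : r < n) (v : Fin r → (Fin n → K)) :
    span K (Set.range v) ≠ ⊤ := by
  intro h
  have h1 : finrank K (span K (Set.range v)) ≤ r := by
    simpa [Set.finrank] using finrank_range_le_card (R := K) v
  rw [h] at h1
  rw [finrank_top, Module.finrank_fintype_fun_eq_card, Fintype.card_fin] at h1
  omega

lemma fin_range_snoc {n : ℕ} {α : Type*} (v : Fin n → α) (x : α) :
    Set.range (Fin.snoc v x : Fin (n+1) → α) = insert x (Set.range v) := by
  ext z
  constructor
  · rintro ⟨i, rfl⟩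
    induction i using Fin.lastCases with
    | last => simp
    | cast j => exact Or.inr ⟨j, by simp⟩
  · rintro (rfl | ⟨j, rfl⟩)
    · exact ⟨Fin.last n, by simp⟩
    · exact ⟨Fin.castSucc j, by simp⟩
lemma greedy {k : ℕ} {Q : Type*} [AddCommGroup Q] [Module K Q] [FiniteDimensional K Q]
    (hc : finrank K Q ≤ k)
    (β : (Fin (k+2) → K) →ₗ[K] (Fin (k+2) → K) →ₗ[K] Q)
    (hβ : span K {z | ∃ x y, z = β x y} = ⊤)
    (p₀ q' : Fin (k+2) → K) (hp₀ : p₀ ≠ 0) (hq' : q' ≠ 0) :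
    ∀ m : ℕ, m ≤ k → ∃ (p q : Fin (m+1) → (Fin (k+2) → K)),
      p 0 = p₀ ∧ LinearIndependent K p ∧
      LinearIndependent K (Fin.cons q' q : Fin (m+2) → (Fin (k+2) → K)) ∧
      min (finrank K Q) m ≤ finrank K (span K (Set.range
        (fun x : {y : Fin (m+1) × Fin (m+1) // y.1 ≤ y.2} => β (p x.1.1) (q x.1.2)))) := by
  intro m
  induction m with
  | zero =>
    intro _
    obtain ⟨y₀, hy₀⟩ := aux_exists_not_mem (aux_span_ne_top (by omega) (fun _ : Fin 1 => q'))
    haveI : Unique (Fin (0+1)) := ⟨⟨⟨0, by omega⟩⟩, fun a => Fin.ext (by omega)⟩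
    have hy₀ne : y₀ ≠ 0 := fun h => hy₀ (h ▸ Submodule.zero_mem _)
    refine ⟨fun _ => p₀, fun _ => y₀, rfl, linearIndependent_unique_iff.2 hp₀, ?_, by simp⟩
    refine linearIndependent_fin_cons.2 ⟨linearIndependent_unique_iff.2 hy₀ne, ?_⟩
    have ha : q' ∉ span K (∅ : Set (Fin (k+2) → K)) := by
      simpa using hq'
    have hy : y₀ ∉ span K (insert q' (∅ : Set (Fin (k+2) → K))) := by
      simpa using (by simpa [Set.range_const] using hy₀ :
        y₀ ∉ span K ({q'} : Set (Fin (k+2) → K)))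
    have := aux_exchange ha hy
    simpa [Set.range_const] using this
  | succ m ih =>
    intro hm
    obtain ⟨p, q, h0, hlp, hlq, hsp⟩ := ih (by omega)
    set Sm := span K (Set.range
        (fun x : {y : Fin (m+1) × Fin (m+1) // y.1 ≤ y.2} => β (p x.1.1) (q x.1.2))) with hSm
    have hUne : span K (Set.range (Fin.cons q' q : Fin (m+2) → (Fin (k+2) → K))) ≠ ⊤ :=
      aux_span_ne_top (by omega) _
    have hlq1 := (linearIndependent_fin_cons.1 hlq).1
    have hlq2 := (linearIndependent_fin_cons.1 hlq).2
    -- common facts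
    have hrange_cons : Set.range (Fin.cons q' q : Fin (m+2) → (Fin (k+2) → K))
        = insert q' (Set.range q) := Fin.range_cons _ _
    -- a helper to finish given suitable x, y
    have main : ∀ x y : Fin (k+2) → K, x ∉ span K (Set.range p) →
        y ∉ span K (Set.range (Fin.cons q' q : Fin (m+2) → (Fin (k+2) → K))) →
        (min (finrank K Q) (m+1) ≤ finrank K (span K (Set.range
          (fun z : {w : Fin (m+2) × Fin (m+2) // w.1 ≤ w.2} =>
            β ((Fin.snoc p x : Fin (m+2) → (Fin (k+2) → K)) z.1.1)
            ((Fin.snoc q y : Fin (m+2) → (Fin (k+2) → K)) z.1.2))))) →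
        ∃ (pp qq : Fin (m+2) → (Fin (k+2) → K)), pp 0 = p₀ ∧ LinearIndependent K pp ∧
          LinearIndependent K (Fin.cons q' qq : Fin (m+3) → (Fin (k+2) → K)) ∧
          min (finrank K Q) (m+1) ≤ finrank K (span K (Set.range
            (fun z : {w : Fin (m+2) × Fin (m+2) // w.1 ≤ w.2} =>
              β (pp z.1.1) (qq z.1.2)))) := by
      intro x y hx hy hspan'
      refine ⟨Fin.snoc p x, Fin.snoc q y, ?_, ?_, ?_, hspan'⟩
      · rw [show (0 : Fin (m+2)) = Fin.castSucc 0 by simp]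
        rw [Fin.snoc_castSucc]
        exact h0
      · exact linearIndependent_fin_snoc.2 ⟨hlp, hx⟩
      · refine linearIndependent_fin_cons.2 ⟨linearIndependent_fin_snoc.2 ⟨hlq1, ?_⟩, ?_⟩
        · exact fun h => hy (span_mono (by rw [hrange_cons]; exact Set.subset_insert _ _) h)
        · rw [fin_range_snoc]
          exact aux_exchange hlq2 (by rwa [← hrange_cons])
    have hmono : ∀ x y : Fin (k+2) → K, Sm ≤ span K (Set.range
          (fun z : {w : Fin (m+2) × Fin (m+2) // w.1 ≤ w.2} =>
            β ((Fin.snoc p x : Fin (m+2) → (Fin (k+2) → K)) z.1.1)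
            ((Fin.snoc q y : Fin (m+2) → (Fin (k+2) → K)) z.1.2))) := by
      intro x y
      rw [hSm, span_le]
      rintro z ⟨⟨⟨j, l⟩, hjl⟩, rfl⟩
      exact subset_span ⟨⟨(Fin.castSucc j, Fin.castSucc l), by simpa using hjl⟩, by simp⟩
    rcases le_or_gt (finrank K Q) (finrank K Sm) with hcase | hcase
    · obtain ⟨y, hy⟩ := aux_exists_not_mem hUne
      obtain ⟨x, hx⟩ := aux_exists_not_mem (aux_span_ne_top (by omega) p)
      refine main x y hx hy ?_
      calc min (finrank K Q) (m+1) ≤ finrank K Q := min_le_left _ _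
        _ ≤ finrank K Sm := hcase
        _ ≤ _ := Submodule.finrank_mono (hmono x y)
    · have hSne : Sm ≠ ⊤ := by
        intro h
        rw [h, finrank_top] at hcase
        omega
      obtain ⟨y, hyU, x0, hx0⟩ := aux_growth β hβ hSne hUne
      have key : ∃ x, x ∉ span K (Set.range p) ∧ ∃ z : {w : Fin (m+2) × Fin (m+2) // w.1 ≤ w.2},
          β ((Fin.snoc p x : Fin (m+2) → (Fin (k+2) → K)) z.1.1)
            ((Fin.snoc q y : Fin (m+2) → (Fin (k+2) → K)) z.1.2) ∉ Sm := by
        by_cases hx0p : x0 ∈ span K (Set.range p)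
        · have hj : ∃ j, β (p j) y ∉ Sm := by
            by_contra hall
            push_neg at hall
            apply hx0
            have hmap : β.flip y x0 ∈ Submodule.map (β.flip y) (span K (Set.range p)) :=
              Submodule.mem_map_of_mem hx0p
            rw [Submodule.map_span] at hmap
            have hle : span K (β.flip y '' Set.range p) ≤ Sm := by
              rw [span_le]
              rintro z ⟨w, ⟨j, rfl⟩, rfl⟩
              simpa using hall j
            simpa using hle hmap
          obtain ⟨j, hj⟩ := hj
          obtain ⟨x, hx⟩ := aux_exists_not_mem (aux_span_ne_top (by omega) p)
          refine ⟨x, hx, ⟨(Fin.castSucc j, Fin.last (m+1)), Fin.le_last _⟩, ?_⟩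
          simpa using hj
        · refine ⟨x0, hx0p, ⟨(Fin.last (m+1), Fin.last (m+1)), le_refl _⟩, ?_⟩
          simpa using hx0
      obtain ⟨x, hx, z0, hz0⟩ := key
      refine main x y hx hyU ?_
      have hlt : Sm < span K (Set.range
          (fun z : {w : Fin (m+2) × Fin (m+2) // w.1 ≤ w.2} =>
            β ((Fin.snoc p x : Fin (m+2) → (Fin (k+2) → K)) z.1.1)
            ((Fin.snoc q y : Fin (m+2) → (Fin (k+2) → K)) z.1.2))) :=
        SetLike.lt_iff_le_and_exists.2 ⟨hmono x y, _, subset_span (Set.mem_range_self z0), hz0⟩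
      have hfr := Submodule.finrank_lt_finrank_of_lt hlt
      rw [Nat.min_def] at hsp ⊢
      split at hsp <;> split <;> omega
lemma tri_det (A : Matrix (Fin (k+2)) (Fin (k+2)) K)
    (hsub : ∀ i j : Fin (k+2), (i:ℕ) = (j:ℕ)+1 → A i j = 1)
    (hlow : ∀ i j : Fin (k+2), (j:ℕ)+1 < (i:ℕ) → A i j = 0) :
    (A.submatrix Fin.succ Fin.castSucc).det = 1 := by
  have hbt : BlockTriangular (A.submatrix Fin.succ Fin.castSucc) id := by
    intro i j hij
    have hij' : (j:ℕ) < (i:ℕ) := hij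
    apply hlow
    simp only [Fin.coe_castSucc, Fin.val_succ]
    omega
  rw [Matrix.det_of_upperTriangular hbt]
  apply Finset.prod_eq_one
  intro i _
  exact hsub _ _ (by simp)

lemma rank_ge (A : Matrix (Fin (k+2)) (Fin (k+2)) K)
    (hsub : ∀ i j : Fin (k+2), (i:ℕ) = (j:ℕ)+1 → A i j = 1)
    (hlow : ∀ i j : Fin (k+2), (j:ℕ)+1 < (i:ℕ) → A i j = 0) :
    k+1 ≤ A.rank := by
  have hdet : (A.submatrix Fin.succ Fin.castSucc).det = 1 := tri_det A hsub hlow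
  have hunit : IsUnit (A.submatrix Fin.succ Fin.castSucc) :=
    (Matrix.isUnit_iff_isUnit_det _).2 (by rw [hdet]; exact isUnit_one)
  have hlicols : LinearIndependent K (fun j => (A.submatrix Fin.succ Fin.castSucc)ᵀ j) :=
    Matrix.linearIndependent_cols_iff_isUnit.2 hunit
  have hli : LinearIndependent K (fun j : Fin (k+1) => Aᵀ (Fin.castSucc j)) := by
    apply LinearIndependent.of_comp (LinearMap.funLeft K K Fin.succ)
    exact hlicols
  rw [Matrix.rank_eq_finrank_span_cols]
  have h1 : span K (Set.range (fun j : Fin (k+1) => Aᵀ (Fin.castSucc j))) ≤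
      span K (Set.range Aᵀ) := span_mono (by rintro z ⟨j, rfl⟩; exact ⟨_, rfl⟩)
  have h2 := Submodule.finrank_mono h1
  rwa [finrank_span_eq_card hli, Fintype.card_fin] at h2

lemma det_rank_lt (A : Matrix (Fin (k+2)) (Fin (k+2)) K) (h : A.det = 0) :
    A.rank < k+2 := by
  have hk : LinearMap.ker A.mulVecLin ≠ ⊥ := by
    intro hbot
    have hinj : Function.Injective A.mulVec := by
      have h2 := LinearMap.ker_eq_bot.1 hbot
      rwa [Matrix.coe_mulVecLin] at h2
    have := Matrix.mulVec_injective_iff_isUnit.1 hinj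
    rw [Matrix.isUnit_iff_isUnit_det, h] at this
    simpa using this
  have hrn := LinearMap.finrank_range_add_finrank_ker A.mulVecLin
  rw [Module.finrank_fintype_fun_eq_card, Fintype.card_fin] at hrn
  have hker : 0 < finrank K (LinearMap.ker A.mulVecLin) := by
    rcases Nat.eq_zero_or_pos (finrank K (LinearMap.ker A.mulVecLin)) with h0 | h0
    · exact absurd (Submodule.finrank_eq_zero.1 h0) hk
    · exact h0
  rw [Matrix.rank]
  omega

lemma det_linear (A : Matrix (Fin (k+2)) (Fin (k+2)) K) (t : K)
    (hsub : ∀ i j : Fin (k+2), (i:ℕ) = (j:ℕ)+1 → A i j = 1)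
    (hlow : ∀ i j : Fin (k+2), (j:ℕ)+1 < (i:ℕ) → A i j = 0) :
    (A + t • Matrix.single (0 : Fin (k+2)) (Fin.last (k+1)) (1:K)).det
      = A.det + t * (-1)^(k+1) := by
  have heq : A + t • Matrix.single (0 : Fin (k+2)) (Fin.last (k+1)) (1:K)
      = A.updateRow 0 (A 0 + (t • (Pi.single (Fin.last (k+1)) (1:K) : Fin (k+2) → K))) := by
    ext i j
    simp only [Matrix.add_apply, Matrix.smul_apply, smul_eq_mul]
    by_cases hi : i = 0
    · subst hi
      rw [Matrix.updateRow_self]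
      simp [Matrix.single, Pi.single_apply, mul_ite, eq_comm]
    · rw [Matrix.updateRow_ne hi]
      simp only [Matrix.single, Matrix.of_apply, ite_and, add_eq_left,
        mul_ite, mul_one, mul_zero]
      rw [if_neg (fun h => hi h.symm)]
  rw [heq, Matrix.det_updateRow_add, Matrix.updateRow_eq_self, Matrix.det_updateRow_smul]
  congr 1
  rw [Matrix.det_succ_row_zero]
  rw [Finset.sum_eq_single (Fin.last (k+1))]
  · have hsubm : (A.updateRow 0 (Pi.single (Fin.last (k+1)) 1)).submatrix
        Fin.succ (Fin.last (k+1)).succAbove = A.submatrix Fin.succ Fin.castSucc := by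
      rw [Fin.succAbove_last]
      ext a b
      simp [Matrix.submatrix_apply, Matrix.updateRow_ne (Fin.succ_ne_zero a)]
    rw [hsubm, tri_det A hsub hlow]
    simp [mul_comm]
  · intro j _ hj
    simp [Matrix.updateRow_self, Pi.single_apply, hj]
  · simp

lemma mat_decomp (A : Matrix (Fin (k+2)) (Fin (k+2)) K) :
    A = ∑ i, vecMulVec (Pi.single i (1:K)) (A i) := by
  ext a b
  rw [Matrix.sum_apply]
  simp [vecMulVec_apply, Pi.single_apply, Finset.sum_ite_eq, ite_mul]

lemma pEq (p q : Fin (k+2) → (Fin (k+2) → K)) (a b : Fin (k+2)) :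
    (Matrix.of fun i j => p j i) * Matrix.single a b (1:K) * (Matrix.of q)
      = vecMulVec (p a) (q b) := by
  ext i j
  simp [Matrix.mul_apply, Matrix.single, vecMulVec_apply, ite_and,
    Finset.sum_ite_eq, mul_ite, ite_mul, Finset.mul_sum, Finset.sum_mul]

end Aux

theorem affine_subspace_contains_rank_sub_one (K : Type*) [Field K] (n : ℕ) (hn : 2 ≤ n)
    (V : Submodule K (Matrix (Fin n) (Fin n) K)) (X : Matrix (Fin n) (Fin n) K)
    (hV : n ^ 2 - Module.finrank K V < n - 1) :
    ∃ M : Matrix (Fin n) (Fin n) K, M - X ∈ V ∧ M.rank = n - 1 := by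
  obtain ⟨k, rfl⟩ : ∃ k, n = k + 2 := ⟨n - 2, by omega⟩
  classical
  set π := V.mkQ with hπdef
  have hfr : finrank K (Matrix (Fin (k+2)) (Fin (k+2)) K ⧸ V) + finrank K V
      = (k+2)*(k+2) := by
    rw [Submodule.finrank_quotient_add_finrank]
    simp [Module.finrank_matrix]
  have hV' : (k+2)*(k+2) - finrank K V < k + 1 := by
    have hpow : (k+2)^2 = (k+2)*(k+2) := sq (k+2)
    rw [hpow] at hV
    omega
  have hcle : finrank K (Matrix (Fin (k+2)) (Fin (k+2)) K ⧸ V) ≤ k := by omega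
  -- the bilinear map
  set vmv : (Fin (k+2) → K) →ₗ[K] (Fin (k+2) → K) →ₗ[K] Matrix (Fin (k+2)) (Fin (k+2)) K :=
    LinearMap.mk₂ K vecMulVec
      (fun x x' y => by ext i j; simp [vecMulVec_apply, add_mul])
      (fun c x y => by ext i j; simp [vecMulVec_apply, mul_assoc])
      (fun x y y' => by ext i j; simp [vecMulVec_apply, mul_add])
      (fun c x y => by ext i j; simp [vecMulVec_apply]; ring) with hvmv
  set β := vmv.compr₂ π with hβdef
  have hβval : ∀ x y, β x y = π (vecMulVec x y) := fun x y => rfl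
  have hβ : span K {z | ∃ x y, z = β x y} = ⊤ := by
    rw [eq_top_iff]
    rintro z -
    obtain ⟨A, rfl⟩ := V.mkQ_surjective z
    have hA : A = ∑ i, vecMulVec (Pi.single i (1:K)) (A i) := mat_decomp A
    show π A ∈ _
    rw [hA, map_sum]
    exact Submodule.sum_mem _ (fun i _ => subset_span ⟨_, _, (hβval _ _).symm⟩)
  -- choice of p₀ and q'
  obtain ⟨p₀, hp₀⟩ := exists_ne (0 : Fin (k+2) → K)
  have hker : LinearMap.ker (β p₀) ≠ ⊥ := by
    intro hbot
    have h1 := LinearMap.finrank_le_finrank_of_injective (LinearMap.ker_eq_bot.1 hbot)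
    rw [Module.finrank_fintype_fun_eq_card, Fintype.card_fin] at h1
    omega
  obtain ⟨q', hq'mem, hq'ne⟩ := (Submodule.ne_bot_iff _).1 hker
  have hβp₀q' : β p₀ q' = 0 := hq'mem
  -- greedy construction
  obtain ⟨p, q, h0, hlp, hlq, hsp⟩ := greedy hcle β hβ p₀ q' hp₀ hq'ne k le_rfl
  set S := span K (Set.range (fun x : {y : Fin (k+1) × Fin (k+1) // y.1 ≤ y.2} =>
    β (p x.1.1) (q x.1.2))) with hSdef
  have hStop : S = ⊤ := by
    apply Submodule.eq_top_of_finrank_eq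
    have h1 := Submodule.finrank_le S
    rw [min_eq_left hcle] at hsp
    omega
  -- complete the bases
  obtain ⟨xl, hxl⟩ := aux_exists_not_mem (aux_span_ne_top (by omega) p)
  set pf : Fin (k+2) → (Fin (k+2) → K) := Fin.snoc p xl with hpf
  set qf : Fin (k+2) → (Fin (k+2) → K) := Fin.snoc q q' with hqf
  have hlpf : LinearIndependent K pf := linearIndependent_fin_snoc.2 ⟨hlp, hxl⟩
  have hlqf : LinearIndependent K qf := by
    rw [hqf, Fin.snoc_eq_cons_rotate]
    exact hlq.comp _ (finRotate _).injective
  set Pm : Matrix (Fin (k+2)) (Fin (k+2)) K := Matrix.of (fun i j => pf j i) with hPm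
  set Qm : Matrix (Fin (k+2)) (Fin (k+2)) K := Matrix.of (fun i j => qf i j) with hQm
  have hPu : IsUnit Pm := by
    have h1 : IsUnit Pmᵀ := Matrix.linearIndependent_rows_iff_isUnit.1 hlpf
    rwa [Matrix.isUnit_transpose] at h1
  have hQu : IsUnit Qm := Matrix.linearIndependent_rows_iff_isUnit.1 hlqf
  -- the affine data
  set J : Matrix (Fin (k+2)) (Fin (k+2)) K :=
    Matrix.of (fun i j : Fin (k+2) => if (i:ℕ) = (j:ℕ)+1 then (1:K) else 0) with hJ
  have hτ : π X - π (Pm * J * Qm) ∈ S := hStop ▸ Submodule.mem_top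
  rw [hSdef, mem_span_range_iff_exists_fun] at hτ
  obtain ⟨co, hco⟩ := hτ
  set T : Matrix (Fin (k+2)) (Fin (k+2)) K :=
    ∑ z : {y : Fin (k+1) × Fin (k+1) // y.1 ≤ y.2}, co z •
      Matrix.single (Fin.castSucc z.1.1) (Fin.castSucc z.1.2) (1:K) with hT
  have hT0 : ∀ i j : Fin (k+2), (j:ℕ) < (i:ℕ) → T i j = 0 := by
    intro i j hij
    rw [hT, Matrix.sum_apply]
    apply Finset.sum_eq_zero
    intro z _
    simp only [Matrix.smul_apply, Matrix.single, Matrix.of_apply, ite_and,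
      smul_eq_mul, mul_ite, mul_one, mul_zero]
    split_ifs with h1 h2
    · exfalso
      have hz := z.2
      have e1 : ((z.1.1 : Fin (k+1)) : ℕ) = (i:ℕ) := by rw [← h1]; simp
      have e2 : ((z.1.2 : Fin (k+1)) : ℕ) = (j:ℕ) := by rw [← h2]; simp
      have e3 : ((z.1.1 : Fin (k+1)) : ℕ) ≤ ((z.1.2 : Fin (k+1)) : ℕ) := hz
      omega
    · rfl
    · rfl
  set A0 : Matrix (Fin (k+2)) (Fin (k+2)) K := J + T with hA0
  have hsub : ∀ i j : Fin (k+2), (i:ℕ) = (j:ℕ)+1 → A0 i j = 1 := by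
    intro i j h
    rw [hA0, Matrix.add_apply, hT0 i j (by omega), hJ]
    simp [h]
  have hlow : ∀ i j : Fin (k+2), (j:ℕ)+1 < (i:ℕ) → A0 i j = 0 := by
    intro i j h
    rw [hA0, Matrix.add_apply, hT0 i j (by omega), hJ]
    simp only [Matrix.of_apply, add_zero]
    rw [if_neg (by omega)]
  set t0 : K := - A0.det * (-1)^(k+1) with ht0
  set E0l : Matrix (Fin (k+2)) (Fin (k+2)) K :=
    Matrix.single (0 : Fin (k+2)) (Fin.last (k+1)) (1:K) with hE0l
  set Af : Matrix (Fin (k+2)) (Fin (k+2)) K := A0 + t0 • E0l with hAf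
  have hE0lzero : ∀ i j : Fin (k+2), i ≠ 0 → E0l i j = 0 := by
    intro i j hi
    rw [hE0l]
    simp only [Matrix.single, Matrix.of_apply, ite_and]
    rw [if_neg (fun h => hi h.symm)]
  have hsubf : ∀ i j : Fin (k+2), (i:ℕ) = (j:ℕ)+1 → Af i j = 1 := by
    intro i j h
    have hi : i ≠ 0 := by
      intro e
      rw [e] at h
      simp at h
    rw [hAf, Matrix.add_apply, Matrix.smul_apply, hE0lzero i j hi, smul_zero, add_zero]
    exact hsub i j h
  have hlowf : ∀ i j : Fin (k+2), (j:ℕ)+1 < (i:ℕ) → Af i j = 0 := by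
    intro i j h
    have hi : i ≠ 0 := by
      intro e
      rw [e] at h
      simp at h
    rw [hAf, Matrix.add_apply, Matrix.smul_apply, hE0lzero i j hi, smul_zero, add_zero]
    exact hlow i j h
  -- determinant of Af is zero
  have hdetAf : Af.det = 0 := by
    rw [hAf, hE0l, det_linear A0 t0 hsub hlow, ht0]
    have hs : ((-1:K)^(k+1)) * ((-1:K)^(k+1)) = 1 := by
      rw [← pow_add]
      exact Even.neg_one_pow ⟨k+1, rfl⟩
    calc A0.det + - A0.det * (-1)^(k+1) * (-1)^(k+1)
        = A0.det + - A0.det * ((-1)^(k+1) * (-1)^(k+1)) := by ring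
      _ = 0 := by rw [hs]; ring
  -- rank facts
  have hr1 : k+1 ≤ Af.rank := rank_ge Af hsubf hlowf
  have hr2 : Af.rank < k+2 := det_rank_lt Af hdetAf
  have hrank : (Pm * Af * Qm).rank = Af.rank := by
    rw [Matrix.rank_mul_eq_left_of_isUnit_det Qm (Pm * Af)
      ((Matrix.isUnit_iff_isUnit_det Qm).1 hQu)]
    rw [Matrix.rank_mul_eq_right_of_isUnit_det Pm Af
      ((Matrix.isUnit_iff_isUnit_det Pm).1 hPu)]
  -- the image under π
  have hπM : π (Pm * Af * Qm) = π X := by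
    have hexp : Pm * Af * Qm = Pm * J * Qm
        + (∑ z : {y : Fin (k+1) × Fin (k+1) // y.1 ≤ y.2}, co z •
            (Pm * Matrix.single (Fin.castSucc z.1.1) (Fin.castSucc z.1.2) (1:K) * Qm))
        + t0 • (Pm * E0l * Qm) := by
      rw [hAf, hA0, hT]
      simp only [Matrix.add_mul, Matrix.mul_add, Matrix.smul_mul, Matrix.mul_smul,
        Finset.sum_mul, Finset.mul_sum]
    rw [hexp]
    rw [map_add, map_add, _root_.map_smul, map_sum]
    have hPEQ0 : Pm * E0l * Qm = vecMulVec (pf 0) (qf (Fin.last (k+1))) := by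
      rw [hE0l, hPm, hQm]
      exact pEq pf qf 0 (Fin.last (k+1))
    have hpf0 : pf 0 = p₀ := by
      rw [hpf, show (0 : Fin (k+2)) = Fin.castSucc 0 by simp, Fin.snoc_castSucc]
      exact h0
    have hqfl : qf (Fin.last (k+1)) = q' := by
      rw [hqf, Fin.snoc_last]
    have hlast : π (Pm * E0l * Qm) = 0 := by
      rw [hPEQ0, hpf0, hqfl, ← hβval, hβp₀q']
    have hmid : ∀ z : {y : Fin (k+1) × Fin (k+1) // y.1 ≤ y.2},
        π (co z • (Pm * Matrix.single (Fin.castSucc z.1.1) (Fin.castSucc z.1.2) (1:K) * Qm))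
          = co z • β (p z.1.1) (q z.1.2) := by
      intro z
      rw [_root_.map_smul]
      congr 1
      rw [hPm, hQm]
      rw [pEq pf qf (Fin.castSucc z.1.1) (Fin.castSucc z.1.2)]
      rw [hpf, hqf, Fin.snoc_castSucc, Fin.snoc_castSucc, hβval]
    have hsum : (∑ z : {y : Fin (k+1) × Fin (k+1) // y.1 ≤ y.2},
        π (co z • (Pm * Matrix.single (Fin.castSucc z.1.1) (Fin.castSucc z.1.2) (1:K) * Qm)))
          = π X - π (Pm * J * Qm) := by
      exact (Finset.sum_congr rfl (fun z _ => hmid z)).trans hco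
    rw [hsum, hlast, smul_zero, add_zero]
    abel
  refine ⟨Pm * Af * Qm, ?_, ?_⟩
  · have hmem : Pm * Af * Qm - X ∈ LinearMap.ker π := by
      rw [LinearMap.mem_ker, map_sub, hπM, sub_self]
    rwa [hπdef, Submodule.ker_mkQ] at hmem
  · rw [hrank]
    omega
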